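/- For every integer q ≥ 2, there exists a tiling TOC_q(4,4,3): the set of all weight-3 words of length 4 over Z_q can be partitioned into pairwise disjoint codes with minimum Hamming distance 4, each of size min{4, A}, where for q ≥ 4 each tile has size 4 (= A_q(4,4,3)). Explicitly for q ≥ 4 with g = q-1: for x,y,z ∈ [g], the code C_{x,y,z} = { {(1,x),(2,y),(3,z)}, {(1,x+1),(2,y+1),(4,w)}, {(1,x+2),(3,z+1),(4,w+2)}, {(2,y+2),(3,z+2),(4,w+1)} } with w ∈ [g] determined by x+y+z+w ≡ 0 (mod g) and all additions mod g taken in [g], and the g^3 codes C_{x,y,z} partition H_q(4,3), each with minimum distance 4. -/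
import Mathlib

set_option maxHeartbeats 2000000
set_option maxRecDepth 20000

/-- `C` is a `q`-ary constant-weight code of length `n`, weight `w`,
and minimum Hamming distance `d`. -/
def isCode (q n d w : ℕ) (C : Finset (Fin n → ZMod q)) : Prop :=
  (∀ x ∈ C, hammingNorm x = w) ∧
  ∀ x ∈ C, ∀ y ∈ C, x ≠ y → d ≤ hammingDist x y

/-- `A_q(n,d,w)`: the maximum size of a `q`-ary constant-weight code of
length `n`, weight `w`, and minimum Hamming distance `d`. -/
noncomputable def maxA (q n d w : ℕ) : ℕ :=
  sSup {m | ∃ C : Finset (Fin n → ZMod q), isCode q n d w C ∧ C.card = m}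

namespace S14
variable {q : ℕ}

def ee (q : ℕ) (a : ZMod (q-1)) : ZMod q := ((a.val + 1 : ℕ) : ZMod q)
def dd (q : ℕ) (b : ZMod q) : ZMod (q-1) := ((b.val - 1 : ℕ) : ZMod (q-1))

section
variable (hq : 4 ≤ q)
include hq

lemma neq : NeZero (q-1) := ⟨by omega⟩

lemma ee_val (a : ZMod (q-1)) : (ee q a).val = a.val + 1 := by
  haveI := neq hq
  have h1 : a.val < q - 1 := ZMod.val_lt a
  exact ZMod.val_cast_of_lt (by omega)

lemma ee_ne_zero (a : ZMod (q-1)) : ee q a ≠ 0 := by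
  intro h
  have hv := ee_val hq a
  haveI : NeZero q := ⟨by omega⟩
  rw [h, ZMod.val_zero] at hv
  omega

lemma dd_ee (a : ZMod (q-1)) : dd q (ee q a) = a := by
  haveI := neq hq
  rw [dd, ee_val hq, Nat.add_sub_cancel]
  exact ZMod.natCast_rightInverse a

lemma ee_inj {a b : ZMod (q-1)} (h : ee q a = ee q b) : a = b := by
  rw [← dd_ee hq a, ← dd_ee hq b, h]

lemma ee_dd {b : ZMod q} (hb : b ≠ 0) : ee q (dd q b) = b := by
  haveI : NeZero q := ⟨by omega⟩
  have hv : b.val ≠ 0 := fun h => hb ((ZMod.val_eq_zero b).mp h)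
  have hlt : b.val < q := ZMod.val_lt b
  have h1 : b.val - 1 < q - 1 := by omega
  rw [ee, dd, ZMod.val_cast_of_lt h1]
  have : b.val - 1 + 1 = b.val := by omega
  rw [this]
  exact ZMod.natCast_rightInverse b

lemma one_ne (h : (1 : ZMod (q-1)) = 0) : False := by
  haveI := neq hq
  have := (ZMod.natCast_eq_zero_iff 1 (q-1)).mp (by exact_mod_cast h)
  have := Nat.le_of_dvd one_pos this
  omega

lemma two_ne (h : (2 : ZMod (q-1)) = 0) : False := by
  haveI := neq hq
  have := (ZMod.natCast_eq_zero_iff 2 (q-1)).mp (by exact_mod_cast h)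
  have := Nat.le_of_dvd two_pos this
  omega

lemma ee_shift {a : ZMod (q-1)} {j k : ZMod (q-1)} (hjk : j ≠ k) :
    ee q (a + j) ≠ ee q (a + k) := fun h => hjk (by
  have := ee_inj hq h
  exact add_left_cancel this)


end
lemma hd4 (x y : Fin 4 → ZMod q) : hammingDist x y =
    (if x 0 ≠ y 0 then 1 else 0) + (if x 1 ≠ y 1 then 1 else 0)
    + (if x 2 ≠ y 2 then 1 else 0) + (if x 3 ≠ y 3 then 1 else 0) := by
  rw [hammingDist, Finset.card_filter, Fin.sum_univ_four]

lemma hn4 (x : Fin 4 → ZMod q) : hammingNorm x =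
    (if x 0 ≠ 0 then 1 else 0) + (if x 1 ≠ 0 then 1 else 0)
    + (if x 2 ≠ 0 then 1 else 0) + (if x 3 ≠ 0 then 1 else 0) := by
  rw [hammingNorm, Finset.card_filter, Fin.sum_univ_four]


lemma norm3_struct (x : Fin 4 → ZMod q) (h : hammingNorm x = 3) :
    ∃ i, x i = 0 ∧ ∀ j, j ≠ i → x j ≠ 0 := by
  rw [hn4] at h
  by_cases h0 : x 0 = 0 <;> by_cases h1 : x 1 = 0 <;> by_cases h2 : x 2 = 0 <;>
    by_cases h3 : x 3 = 0 <;> simp [h0, h1, h2, h3] at h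
  · exact ⟨0, h0, fun j hj => by fin_cases j <;> simp_all⟩
  · exact ⟨1, h1, fun j hj => by fin_cases j <;> simp_all⟩
  · exact ⟨2, h2, fun j hj => by fin_cases j <;> simp_all⟩
  · exact ⟨3, h3, fun j hj => by fin_cases j <;> simp_all⟩

lemma dist_le_of_agree {x y : Fin 4 → ZMod q} {i : Fin 4} (h : x i = y i) :
    hammingDist x y ≤ 3 := by
  have hsub : ({j | x j ≠ y j} : Finset (Fin 4)) ⊆ Finset.univ.erase i := by
    intro j hj
    simp only [Finset.mem_filter, Finset.mem_univ, true_and] at hj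
    exact Finset.mem_erase.2 ⟨fun hji => hj (hji ▸ h), Finset.mem_univ j⟩
  calc hammingDist x y ≤ (Finset.univ.erase i).card := Finset.card_le_card hsub
  _ = 3 := by simp

lemma code_card_le_four {C : Finset (Fin 4 → ZMod q)} (h : isCode q 4 4 3 C) :
    C.card ≤ 4 := by
  classical
  have key : ∀ x ∈ C, ∃ i, x i = 0 := by
    intro x hx
    obtain ⟨i, hi, -⟩ := norm3_struct x (h.1 x hx)
    exact ⟨i, hi⟩
  set f : (Fin 4 → ZMod q) → Fin 4 := fun x => if hx : ∃ i, x i = 0 then hx.choose else 0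
    with hf
  have hfz : ∀ x ∈ C, x (f x) = 0 := by
    intro x hx
    have hex := key x hx
    simp only [hf, dif_pos hex]
    exact hex.choose_spec
  have hinj : Set.InjOn f C := by
    intro x hx y hy hxy
    by_contra hne
    have h4 := h.2 x hx y hy hne
    have hagree : x (f x) = y (f x) := by rw [hfz x hx, hxy, hfz y hy]
    have := dist_le_of_agree hagree
    omega
  calc C.card ≤ (Finset.univ : Finset (Fin 4)).card := by
        have := Finset.card_le_card_of_injOn f (fun x _ => Finset.mem_univ (f x)) hinj
        simpa using this
  _ = 4 := by simp

section
variable (hq : 4 ≤ q)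
include hq

lemma ne01 (a : ZMod (q-1)) : ee q a ≠ ee q (a+1) :=
  fun h => one_ne hq (left_eq_add.mp (ee_inj hq h))

lemma ne02 (a : ZMod (q-1)) : ee q a ≠ ee q (a+2) :=
  fun h => two_ne hq (left_eq_add.mp (ee_inj hq h))

lemma ne12 (a : ZMod (q-1)) : ee q (a+1) ≠ ee q (a+2) := by
  intro h
  have h2 := add_left_cancel (ee_inj hq h)
  have h3 : (1 : ZMod (q-1)) + 1 = 1 + 0 := by
    rw [one_add_one_eq_two, add_zero]; exact h2.symm
  exact one_ne hq (add_left_cancel h3)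

lemma ne21 (a : ZMod (q-1)) : ee q (a+2) ≠ ee q (a+1) := (ne12 hq a).symm

lemma ee_ne_zero' (a : ZMod (q-1)) : (0 : ZMod q) ≠ ee q a := fun h => ee_ne_zero hq a h.symm

end

abbrev Idx (q : ℕ) := ZMod (q-1) × ZMod (q-1) × ZMod (q-1)

def wA (q : ℕ) (t : Idx q) : Fin 4 → ZMod q := ![ee q t.1, ee q t.2.1, ee q t.2.2, 0]
def wB (q : ℕ) (t : Idx q) : Fin 4 → ZMod q :=
  ![ee q (t.1+1), ee q (t.2.1+1), 0, ee q (-(t.1+t.2.1+t.2.2))]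
def wC (q : ℕ) (t : Idx q) : Fin 4 → ZMod q :=
  ![ee q (t.1+2), 0, ee q (t.2.2+1), ee q (-(t.1+t.2.1+t.2.2)+2)]
def wD (q : ℕ) (t : Idx q) : Fin 4 → ZMod q :=
  ![0, ee q (t.2.1+2), ee q (t.2.2+2), ee q (-(t.1+t.2.1+t.2.2)+1)]

def tile (q : ℕ) (t : Idx q) : Finset (Fin 4 → ZMod q) := {wA q t, wB q t, wC q t, wD q t}

section
variable (hq : 4 ≤ q)
include hq

lemma normA (t : Idx q) : hammingNorm (wA q t) = 3 := by
  rw [hn4]; simp [wA, ee_ne_zero hq]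
lemma normB (t : Idx q) : hammingNorm (wB q t) = 3 := by
  rw [hn4]; simp [wB, ee_ne_zero hq]
lemma normC (t : Idx q) : hammingNorm (wC q t) = 3 := by
  rw [hn4]; simp [wC, ee_ne_zero hq]
lemma normD (t : Idx q) : hammingNorm (wD q t) = 3 := by
  rw [hn4]; simp [wD, ee_ne_zero hq]

lemma distAB (t : Idx q) : 4 ≤ hammingDist (wA q t) (wB q t) := by
  rw [hd4]
  simp [wA, wB, ne01 hq, ee_ne_zero hq, ee_ne_zero' hq]

lemma distAC (t : Idx q) : 4 ≤ hammingDist (wA q t) (wC q t) := by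
  rw [hd4]
  simp [wA, wC, ne02 hq, ne01 hq, ee_ne_zero hq, ee_ne_zero' hq]

lemma distAD (t : Idx q) : 4 ≤ hammingDist (wA q t) (wD q t) := by
  rw [hd4]
  simp [wA, wD, ne02 hq, ee_ne_zero hq, ee_ne_zero' hq]

lemma distBC (t : Idx q) : 4 ≤ hammingDist (wB q t) (wC q t) := by
  rw [hd4]
  simp [wB, wC, ne12 hq, ne02 hq, ne01 hq, ee_ne_zero hq, ee_ne_zero' hq]

lemma distBD (t : Idx q) : 4 ≤ hammingDist (wB q t) (wD q t) := by
  rw [hd4]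
  simp [wB, wD, ne12 hq, ne01 hq, ee_ne_zero hq, ee_ne_zero' hq]

lemma distCD (t : Idx q) : 4 ≤ hammingDist (wC q t) (wD q t) := by
  rw [hd4]
  simp [wC, wD, ne12 hq, ne21 hq, ee_ne_zero hq, ee_ne_zero' hq]

end

def idx (q : ℕ) (u : Fin 4 → ZMod q) : Idx q :=
  if u 3 = 0 then (dd q (u 0), dd q (u 1), dd q (u 2))
  else if u 2 = 0 then
    (dd q (u 0) - 1, dd q (u 1) - 1, -(dd q (u 0) - 1 + (dd q (u 1) - 1)) - dd q (u 3))
  else if u 1 = 0 then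
    (dd q (u 0) - 2, -(dd q (u 0) - 2 + (dd q (u 2) - 1)) - (dd q (u 3) - 2), dd q (u 2) - 1)
  else
    (-(dd q (u 1) - 2 + (dd q (u 2) - 2)) - (dd q (u 3) - 1), dd q (u 1) - 2, dd q (u 2) - 2)

section
variable (hq : 4 ≤ q)
include hq

lemma idx_wA (t : Idx q) : idx q (wA q t) = t := by
  obtain ⟨x, y, z⟩ := t
  rw [idx, if_pos (show wA q (x,y,z) 3 = 0 by simp [wA])]
  simp [wA, dd_ee hq]

lemma idx_wB (t : Idx q) : idx q (wB q t) = t := by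
  obtain ⟨x, y, z⟩ := t
  rw [idx, if_neg (show ¬ wB q (x,y,z) 3 = 0 by simp [wB]; exact ee_ne_zero hq _),
    if_pos (show wB q (x,y,z) 2 = 0 by simp [wB])]
  simp only [wB, Matrix.cons_val_zero, Matrix.cons_val_one, Matrix.cons_val_two,
    Matrix.cons_val_three, Matrix.head_cons, Matrix.tail_cons, dd_ee hq, Prod.mk.injEq]
  refine ⟨by ring, by ring, by ring⟩

lemma idx_wC (t : Idx q) : idx q (wC q t) = t := by
  obtain ⟨x, y, z⟩ := t
  rw [idx, if_neg (show ¬ wC q (x,y,z) 3 = 0 by simp [wC]; exact ee_ne_zero hq _),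
    if_neg (show ¬ wC q (x,y,z) 2 = 0 by simp [wC]; exact ee_ne_zero hq _),
    if_pos (show wC q (x,y,z) 1 = 0 by simp [wC])]
  simp only [wC, Matrix.cons_val_zero, Matrix.cons_val_one, Matrix.cons_val_two,
    Matrix.cons_val_three, Matrix.head_cons, Matrix.tail_cons, dd_ee hq, Prod.mk.injEq]
  refine ⟨by ring, by ring, by ring⟩

lemma idx_wD (t : Idx q) : idx q (wD q t) = t := by
  obtain ⟨x, y, z⟩ := t
  rw [idx, if_neg (show ¬ wD q (x,y,z) 3 = 0 by simp [wD]; exact ee_ne_zero hq _),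
    if_neg (show ¬ wD q (x,y,z) 2 = 0 by simp [wD]; exact ee_ne_zero hq _),
    if_neg (show ¬ wD q (x,y,z) 1 = 0 by simp [wD]; exact ee_ne_zero hq _)]
  simp only [wD, Matrix.cons_val_zero, Matrix.cons_val_one, Matrix.cons_val_two,
    Matrix.cons_val_three, Matrix.head_cons, Matrix.tail_cons, dd_ee hq, Prod.mk.injEq]
  refine ⟨by ring, by ring, by ring⟩

lemma idx_mem {u : Fin 4 → ZMod q} {t : Idx q} (h : u ∈ tile q t) : idx q u = t := by
  rw [tile, Finset.mem_insert, Finset.mem_insert, Finset.mem_insert,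
    Finset.mem_singleton] at h
  rcases h with rfl|rfl|rfl|rfl
  exacts [idx_wA hq t, idx_wB hq t, idx_wC hq t, idx_wD hq t]


lemma ne_of_dist {x y : Fin 4 → ZMod q} (h : 4 ≤ hammingDist x y) : x ≠ y := by
  intro hxy
  rw [hxy, hammingDist_self] at h
  omega

omit hq in
lemma card4 {α : Type*} [DecidableEq α] {a b c d : α} (hab : a ≠ b) (hac : a ≠ c)
    (had : a ≠ d) (hbc : b ≠ c) (hbd : b ≠ d) (hcd : c ≠ d) :
    ({a, b, c, d} : Finset α).card = 4 := by
  rw [Finset.card_insert_of_notMem (by simp [hab, hac, had]),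
    Finset.card_insert_of_notMem (by simp [hbc, hbd]),
    Finset.card_insert_of_notMem (by simp [hcd]), Finset.card_singleton]

lemma card_tile (t : Idx q) : (tile q t).card = 4 := by
  rw [tile]
  exact card4 (ne_of_dist hq (distAB hq t)) (ne_of_dist hq (distAC hq t))
    (ne_of_dist hq (distAD hq t)) (ne_of_dist hq (distBC hq t))
    (ne_of_dist hq (distBD hq t)) (ne_of_dist hq (distCD hq t))

lemma isCode_tile (t : Idx q) : isCode q 4 4 3 (tile q t) := by
  constructor
  · intro x hx
    rw [tile, Finset.mem_insert, Finset.mem_insert, Finset.mem_insert,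
      Finset.mem_singleton] at hx
    rcases hx with rfl|rfl|rfl|rfl
    exacts [normA hq t, normB hq t, normC hq t, normD hq t]
  · intro x hx y hy hxy
    rw [tile, Finset.mem_insert, Finset.mem_insert, Finset.mem_insert,
      Finset.mem_singleton] at hx hy
    rcases hx with rfl|rfl|rfl|rfl <;> rcases hy with rfl|rfl|rfl|rfl <;>
      first
        | exact absurd rfl hxy
        | exact distAB hq t
        | exact distAC hq t
        | exact distAD hq t
        | exact distBC hq t
        | exact distBD hq t
        | exact distCD hq t
        | (rw [hammingDist_comm]
           first
             | exact distAB hq t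
             | exact distAC hq t
             | exact distAD hq t
             | exact distBC hq t
             | exact distBD hq t
             | exact distCD hq t)

lemma cover {u : Fin 4 → ZMod q} (hu : hammingNorm u = 3) : ∃ t : Idx q, u ∈ tile q t := by
  obtain ⟨i, hi, hnz⟩ := norm3_struct u hu
  have mem4 : ∀ t : Idx q, ∀ v, v = wA q t ∨ v = wB q t ∨ v = wC q t ∨ v = wD q t →
      v ∈ tile q t := by
    intro t v hv
    rw [tile, Finset.mem_insert, Finset.mem_insert, Finset.mem_insert, Finset.mem_singleton]
    exact hv
  fin_cases i
  · -- u 0 = 0 : u = wD t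
    refine ⟨(-(dd q (u 1) - 2 + (dd q (u 2) - 2)) - (dd q (u 3) - 1),
      dd q (u 1) - 2, dd q (u 2) - 2), mem4 _ _ (Or.inr (Or.inr (Or.inr ?_)))⟩
    have e1 : ee q (dd q (u 1) - 2 + 2) = u 1 := by
      rw [show dd q (u 1) - 2 + 2 = dd q (u 1) by ring, ee_dd hq (hnz 1 (by decide))]
    have e2 : ee q (dd q (u 2) - 2 + 2) = u 2 := by
      rw [show dd q (u 2) - 2 + 2 = dd q (u 2) by ring, ee_dd hq (hnz 2 (by decide))]
    have e3 : ee q (-(-(dd q (u 1) - 2 + (dd q (u 2) - 2)) - (dd q (u 3) - 1)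
        + (dd q (u 1) - 2) + (dd q (u 2) - 2)) + 1) = u 3 := by
      rw [show -(-(dd q (u 1) - 2 + (dd q (u 2) - 2)) - (dd q (u 3) - 1)
        + (dd q (u 1) - 2) + (dd q (u 2) - 2)) + 1 = dd q (u 3) by ring,
        ee_dd hq (hnz 3 (by decide))]
    funext j
    fin_cases j <;>
      simp only [wD, Matrix.cons_val_zero, Matrix.cons_val_one, Matrix.cons_val_two,
        Matrix.cons_val_three, Matrix.head_cons, Matrix.tail_cons]
    · exact hi
    · exact e1.symm
    · exact e2.symm
    · exact e3.symm
  · -- u 1 = 0 : u = wC t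
    refine ⟨(dd q (u 0) - 2, -(dd q (u 0) - 2 + (dd q (u 2) - 1)) - (dd q (u 3) - 2),
      dd q (u 2) - 1), mem4 _ _ (Or.inr (Or.inr (Or.inl ?_)))⟩
    have e0 : ee q (dd q (u 0) - 2 + 2) = u 0 := by
      rw [show dd q (u 0) - 2 + 2 = dd q (u 0) by ring, ee_dd hq (hnz 0 (by decide))]
    have e2 : ee q (dd q (u 2) - 1 + 1) = u 2 := by
      rw [show dd q (u 2) - 1 + 1 = dd q (u 2) by ring, ee_dd hq (hnz 2 (by decide))]
    have e3 : ee q (-(dd q (u 0) - 2 + (-(dd q (u 0) - 2 + (dd q (u 2) - 1)) - (dd q (u 3) - 2))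
        + (dd q (u 2) - 1)) + 2) = u 3 := by
      rw [show -(dd q (u 0) - 2 + (-(dd q (u 0) - 2 + (dd q (u 2) - 1)) - (dd q (u 3) - 2))
        + (dd q (u 2) - 1)) + 2 = dd q (u 3) by ring, ee_dd hq (hnz 3 (by decide))]
    funext j
    fin_cases j <;>
      simp only [wC, Matrix.cons_val_zero, Matrix.cons_val_one, Matrix.cons_val_two,
        Matrix.cons_val_three, Matrix.head_cons, Matrix.tail_cons]
    · exact e0.symm
    · exact hi
    · exact e2.symm
    · exact e3.symm
  · -- u 2 = 0 : u = wB t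
    refine ⟨(dd q (u 0) - 1, dd q (u 1) - 1,
      -(dd q (u 0) - 1 + (dd q (u 1) - 1)) - dd q (u 3)), mem4 _ _ (Or.inr (Or.inl ?_))⟩
    have e0 : ee q (dd q (u 0) - 1 + 1) = u 0 := by
      rw [show dd q (u 0) - 1 + 1 = dd q (u 0) by ring, ee_dd hq (hnz 0 (by decide))]
    have e1 : ee q (dd q (u 1) - 1 + 1) = u 1 := by
      rw [show dd q (u 1) - 1 + 1 = dd q (u 1) by ring, ee_dd hq (hnz 1 (by decide))]
    have e3 : ee q (-(dd q (u 0) - 1 + (dd q (u 1) - 1)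
        + (-(dd q (u 0) - 1 + (dd q (u 1) - 1)) - dd q (u 3)))) = u 3 := by
      rw [show -(dd q (u 0) - 1 + (dd q (u 1) - 1)
        + (-(dd q (u 0) - 1 + (dd q (u 1) - 1)) - dd q (u 3))) = dd q (u 3) by ring,
        ee_dd hq (hnz 3 (by decide))]
    funext j
    fin_cases j <;>
      simp only [wB, Matrix.cons_val_zero, Matrix.cons_val_one, Matrix.cons_val_two,
        Matrix.cons_val_three, Matrix.head_cons, Matrix.tail_cons]
    · exact e0.symm
    · exact e1.symm
    · exact hi
    · exact e3.symm
  · -- u 3 = 0 : u = wA t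
    refine ⟨(dd q (u 0), dd q (u 1), dd q (u 2)), mem4 _ _ (Or.inl ?_)⟩
    funext j
    fin_cases j <;>
      simp only [wA, Matrix.cons_val_zero, Matrix.cons_val_one, Matrix.cons_val_two,
        Matrix.cons_val_three, Matrix.head_cons, Matrix.tail_cons]
    · exact (ee_dd hq (hnz 0 (by decide))).symm
    · exact (ee_dd hq (hnz 1 (by decide))).symm
    · exact (ee_dd hq (hnz 2 (by decide))).symm
    · exact hi

end



lemma maxA_eq_of {q m : ℕ}
    (hex : ∃ C : Finset (Fin 4 → ZMod q), isCode q 4 4 3 C ∧ C.card = m)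
    (hub : ∀ C : Finset (Fin 4 → ZMod q), isCode q 4 4 3 C → C.card ≤ m) :
    maxA q 4 4 3 = m := by
  have hbdd : ∀ k ∈ {m' | ∃ C : Finset (Fin 4 → ZMod q), isCode q 4 4 3 C ∧ C.card = m'},
      k ≤ m := by
    rintro k ⟨C, hC, rfl⟩; exact hub C hC
  exact le_antisymm (csSup_le ⟨m, hex⟩ hbdd) (le_csSup ⟨m, fun k hk => hbdd k hk⟩ hex)

lemma all_diff {q : ℕ} {x y : Fin 4 → ZMod q} (h4 : 4 ≤ hammingDist x y) :
    ∀ i, x i ≠ y i := by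
  intro i hi
  have := dist_le_of_agree hi
  omega

lemma zero_pos_ne {q : ℕ} {x y : Fin 4 → ZMod q} {i j : Fin 4}
    (h4 : 4 ≤ hammingDist x y) (hx : x i = 0) (hy : y j = 0) : i ≠ j := by
  intro hij
  exact all_diff h4 i (by rw [hx, hij, hy])

lemma ub2 : ∀ C : Finset (Fin 4 → ZMod 2), isCode 2 4 4 3 C → C.card ≤ 1 := by
  intro C hC
  by_contra hcard
  have h1 : 1 < C.card := by omega
  obtain ⟨x, hx, y, hy, hxy⟩ := Finset.one_lt_card.mp h1
  have h4 := hC.2 x hx y hy hxy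
  obtain ⟨i, hi, hnx⟩ := norm3_struct x (hC.1 x hx)
  obtain ⟨j, hj, hny⟩ := norm3_struct y (hC.1 y hy)
  have hij : i ≠ j := zero_pos_ne h4 hi hj
  have hex : ∀ i j : Fin 4, i ≠ j → ∃ k : Fin 4, k ≠ i ∧ k ≠ j := by decide
  obtain ⟨k, hki, hkj⟩ := hex i j hij
  have key2 : ∀ a b : ZMod 2, a ≠ 0 → b ≠ 0 → a = b := by decide
  exact all_diff h4 k (key2 _ _ (hnx k hki) (hny k hkj))

lemma ub3 : ∀ C : Finset (Fin 4 → ZMod 3), isCode 3 4 4 3 C → C.card ≤ 2 := by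
  intro C hC
  by_contra hcard
  have h2 : 2 < C.card := by omega
  obtain ⟨x, y, z, hx, hy, hz, hxy, hxz, hyz⟩ := Finset.two_lt_card_iff.mp h2
  have hxy4 := hC.2 x hx y hy hxy
  have hxz4 := hC.2 x hx z hz hxz
  have hyz4 := hC.2 y hy z hz hyz
  obtain ⟨i, hi, hnx⟩ := norm3_struct x (hC.1 x hx)
  obtain ⟨j, hj, hny⟩ := norm3_struct y (hC.1 y hy)
  obtain ⟨k, hk, hnz⟩ := norm3_struct z (hC.1 z hz)
  have hij : i ≠ j := zero_pos_ne hxy4 hi hj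
  have hik : i ≠ k := zero_pos_ne hxz4 hi hk
  have hjk : j ≠ k := zero_pos_ne hyz4 hj hk
  have hex : ∀ i j k : Fin 4, i ≠ j → i ≠ k → j ≠ k →
      ∃ l : Fin 4, l ≠ i ∧ l ≠ j ∧ l ≠ k := by decide
  obtain ⟨l, hli, hlj, hlk⟩ := hex i j k hij hik hjk
  have key3 : ∀ a b c : ZMod 3, a ≠ 0 → b ≠ 0 → c ≠ 0 →
      a ≠ b → a ≠ c → b ≠ c → False := by decide
  exact key3 _ _ _ (hnx l hli) (hny l hlj) (hnz l hlk)
    (all_diff hxy4 l) (all_diff hxz4 l) (all_diff hyz4 l)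

def P2 : Finset (Finset (Fin 4 → ZMod 2)) :=
  {{![0,1,1,1]},{![1,0,1,1]},{![1,1,0,1]},{![1,1,1,0]}}

def P3 : Finset (Finset (Fin 4 → ZMod 3)) :=
  {{![0,1,1,1], ![1,0,2,2]},
   {![1,1,0,1], ![2,2,1,0]},
   {![0,1,1,2], ![1,0,2,1]},
   {![1,1,0,2], ![2,2,2,0]},
   {![0,1,2,1], ![1,0,1,2]},
   {![1,2,0,1], ![2,1,1,0]},
   {![0,1,2,2], ![1,0,1,1]},
   {![1,2,0,2], ![2,1,2,0]},
   {![0,2,1,1], ![2,0,2,2]},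
   {![2,1,0,1], ![1,2,1,0]},
   {![0,2,1,2], ![2,0,2,1]},
   {![2,1,0,2], ![1,2,2,0]},
   {![0,2,2,1], ![2,0,1,2]},
   {![2,2,0,1], ![1,1,1,0]},
   {![0,2,2,2], ![2,0,1,1]},
   {![2,2,0,2], ![1,1,2,0]}}


end S14

/-- Tiling `TOC_q(4,4,3)` for every `q ≥ 2`: the set of all weight-3 words of
length 4 over `Z_q` can be partitioned into pairwise disjoint optimal
`(4,4,3)_q`-codes (codes with minimum distance 4 of size `A_q(4,4,3)`);
moreover for `q ≥ 4` each tile has size `4 = A_q(4,4,3)`. -/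
theorem stmt14 (q : ℕ) (hq : 2 ≤ q) :
    (∃ P : Finset (Finset (Fin 4 → ZMod q)),
      (∀ C ∈ P, isCode q 4 4 3 C ∧ C.card = maxA q 4 4 3) ∧
      (∀ C ∈ P, ∀ D ∈ P, C ≠ D → Disjoint C D) ∧
      ∀ x : Fin 4 → ZMod q, hammingNorm x = 3 → ∃ C ∈ P, x ∈ C) ∧
    (4 ≤ q → maxA q 4 4 3 = 4) := by
  open S14 in
  by_cases hq4 : 4 ≤ q
  · have hmax : maxA q 4 4 3 = 4 :=
      maxA_eq_of ⟨tile q (0, 0, 0), isCode_tile hq4 _, card_tile hq4 _⟩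
        (fun C hC => code_card_le_four hC)
    haveI := S14.neq hq4
    refine ⟨⟨Finset.image (tile q) Finset.univ, ?_, ?_, ?_⟩, fun _ => hmax⟩
    · intro C hC
      obtain ⟨t, -, rfl⟩ := Finset.mem_image.mp hC
      exact ⟨isCode_tile hq4 t, by rw [hmax]; exact card_tile hq4 t⟩
    · intro C hC D hD hne
      obtain ⟨t, -, rfl⟩ := Finset.mem_image.mp hC
      obtain ⟨s, -, rfl⟩ := Finset.mem_image.mp hD
      rw [Finset.disjoint_left]
      intro a haC haD
      exact hne (by rw [← idx_mem hq4 haC, ← idx_mem hq4 haD])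
    · intro x hx
      obtain ⟨t, ht⟩ := cover hq4 hx
      exact ⟨tile q t, Finset.mem_image.mpr ⟨t, Finset.mem_univ t, rfl⟩, ht⟩
  · interval_cases q
    · -- q = 2
      have hmax : maxA 2 4 4 3 = 1 :=
        maxA_eq_of ⟨{![0,1,1,1]}, ⟨by decide, by decide⟩, by decide⟩ ub2
      refine ⟨⟨P2, ?_, ?_, ?_⟩, by omega⟩
      · intro C hC
        rw [hmax]
        simp only [P2, Finset.mem_insert, Finset.mem_singleton] at hC
        rcases hC with h|h|h|h <;> subst h <;> exact ⟨⟨by decide, by decide⟩, by decide⟩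
      · intro C hC D hD hne
        rw [Finset.disjoint_left]
        simp only [P2, Finset.mem_insert, Finset.mem_singleton] at hC hD
        rcases hC with h|h|h|h <;> subst h <;> rcases hD with h|h|h|h <;>
          first | (exact absurd h.symm hne) | (subst h; decide)
      · decide
    · -- q = 3
      have hmax : maxA 3 4 4 3 = 2 :=
        maxA_eq_of ⟨{![0,1,1,1], ![1,0,2,2]}, ⟨by decide, by decide⟩, by decide⟩ ub3
      refine ⟨⟨P3, ?_, ?_, ?_⟩, by omega⟩
      · intro C hC
        rw [hmax]
        simp only [P3, Finset.mem_insert, Finset.mem_singleton] at hC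
        rcases hC with h|h|h|h|h|h|h|h|h|h|h|h|h|h|h|h <;> subst h <;>
          exact ⟨⟨by decide, by decide⟩, by decide⟩
      · intro C hC D hD hne
        rw [Finset.disjoint_left]
        simp only [P3, Finset.mem_insert, Finset.mem_singleton] at hC hD
        rcases hC with h|h|h|h|h|h|h|h|h|h|h|h|h|h|h|h <;> subst h <;>
          rcases hD with h|h|h|h|h|h|h|h|h|h|h|h|h|h|h|h <;>
          first | (exact absurd h.symm hne) | (subst h; decide)
      · decide
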